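/- Let S, A, B be real n×n matrices such that S is symmetric positive definite, SA and SB are symmetric, and SB is positive semidefinite, and set A_S := S^{1/2} A S^{-1/2}, B_S := S^{1/2} B S^{-1/2}. Suppose K_S is a real skew-symmetric n×n matrix and θ > 0 is such that [K_S A_S]^s + B_S ≥ θ I (i.e., the symmetric matrix [K_S A_S]^s + B_S − θI is positive semidefinite). Define K := S^{1/2} K_S S^{-1/2}. Then: (a) KS is skew-symmetric; (b) [K S A]^s + S B = S^{1/2}([K_S A_S]^s + B_S) S^{1/2}; and (c) [K S A]^s + S B is positive definite. -/

import Mathlib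

open Matrix

/-- The symmetric part `[M]ˢ = (1/2)(M + Mᵀ)` of a real square matrix. -/
noncomputable def symPart {n : ℕ} (M : Matrix (Fin n) (Fin n) ℝ) : Matrix (Fin n) (Fin n) ℝ :=
  (1 / 2 : ℝ) • (M + Mᵀ)

/-- The positive semidefinite square root of a positive semidefinite matrix, with the
definition `Matrix.PosSemidef.sqrt` had in the older Mathlib (removed since). -/
noncomputable def Matrix.PosSemidef.sqrt {n : Type*} [Fintype n] [DecidableEq n]
    {A : Matrix n n ℝ} (hA : A.PosSemidef) : Matrix n n ℝ :=
  hA.1.eigenvectorUnitary.1 * diagonal ((↑) ∘ (√·) ∘ hA.1.eigenvalues) *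
  (star hA.1.eigenvectorUnitary : Matrix n n ℝ)

/-- With `S` symmetric positive definite, `S*A`, `S*B` symmetric, `S*B`
positive semidefinite, `A_S := S^(1/2) A S^(-1/2)`, `B_S := S^(1/2) B S^(-1/2)`, if `K_S`
is skew-symmetric and `[K_S A_S]ˢ + B_S ≥ θ I` for some `θ > 0`, then
`K := S^(1/2) K_S S^(-1/2)` satisfies: (a) `K*S` is skew-symmetric;
(b) `[K S A]ˢ + S B = S^(1/2) ([K_S A_S]ˢ + B_S) S^(1/2)`; (c) `[K S A]ˢ + S B` is
positive definite. -/
theorem compensating_symbol_conjugation (n : ℕ)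
    (S A B K_S : Matrix (Fin n) (Fin n) ℝ) (θ : ℝ)
    (hS : S.PosDef) (hSA : (S * A).IsSymm) (hSB : (S * B).IsSymm)
    (hSBpsd : (S * B).PosSemidef)
    (hKskew : K_Sᵀ = -K_S) (hθ : 0 < θ)
    (hpos : (symPart (K_S * (hS.posSemidef.sqrt * A * hS.posSemidef.sqrt⁻¹)) +
        hS.posSemidef.sqrt * B * hS.posSemidef.sqrt⁻¹ -
        θ • (1 : Matrix (Fin n) (Fin n) ℝ)).PosSemidef) :
    ((hS.posSemidef.sqrt * K_S * hS.posSemidef.sqrt⁻¹ * S)ᵀ =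
      -(hS.posSemidef.sqrt * K_S * hS.posSemidef.sqrt⁻¹ * S)) ∧
    (symPart (hS.posSemidef.sqrt * K_S * hS.posSemidef.sqrt⁻¹ * S * A) + S * B =
      hS.posSemidef.sqrt *
        (symPart (K_S * (hS.posSemidef.sqrt * A * hS.posSemidef.sqrt⁻¹)) +
          hS.posSemidef.sqrt * B * hS.posSemidef.sqrt⁻¹) * hS.posSemidef.sqrt) ∧
    (symPart (hS.posSemidef.sqrt * K_S * hS.posSemidef.sqrt⁻¹ * S * A) + S * B).PosDef := by
  set R := hS.posSemidef.sqrt with hRdef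
  have hRpsd : R.PosSemidef := by
    rw [hRdef, Matrix.PosSemidef.sqrt, Matrix.star_eq_conjTranspose]
    exact (Matrix.posSemidef_diagonal_iff.mpr fun i => by
      simp only [Function.comp_apply]
      exact Real.sqrt_nonneg _).mul_mul_conjTranspose_same _
  have hRsymm : Rᵀ = R := by
    have := hRpsd.isHermitian
    simpa [Matrix.IsHermitian, Matrix.conjTranspose_eq_transpose_of_trivial] using this
  have hRR : R * R = S := by
    have hU : (star hS.posSemidef.1.eigenvectorUnitary : Matrix (Fin n) (Fin n) ℝ) *
        hS.posSemidef.1.eigenvectorUnitary.1 = 1 := Unitary.coe_star_mul_self _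
    rw [hRdef, Matrix.PosSemidef.sqrt]
    conv_rhs => rw [hS.posSemidef.1.spectral_theorem, Unitary.conjStarAlgAut_apply]
    rw [show ∀ a b c d e f : Matrix (Fin n) (Fin n) ℝ, a * b * c * (d * e * f) = a * (b * (c * d) * e) * f
      from fun a b c d e f => by noncomm_ring, hU, mul_one, diagonal_mul_diagonal]
    congr 3
    funext i
    simp only [Function.comp_apply, RCLike.ofReal_real_eq_id, id]
    exact Real.mul_self_sqrt (hS.posSemidef.eigenvalues_nonneg i)
  have hdet : R.det ≠ 0 := by
    intro h
    have : S.det = 0 := by rw [← hRR, Matrix.det_mul, h, mul_zero]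
    exact hS.det_pos.ne' this
  have hRunit : IsUnit R.det := isUnit_iff_ne_zero.2 hdet
  have hRiR : R⁻¹ * R = 1 := Matrix.nonsing_inv_mul R hRunit
  have hRRi : R * R⁻¹ = 1 := Matrix.mul_nonsing_inv R hRunit
  have hRiS : R⁻¹ * S = R := by rw [← hRR, ← mul_assoc, hRiR, one_mul]
  have hKS : R * K_S * R⁻¹ * S = R * K_S * R := by
    rw [mul_assoc, hRiS]
  -- part (a)
  have ha : (R * K_S * R⁻¹ * S)ᵀ = -(R * K_S * R⁻¹ * S) := by
    rw [hKS]
    rw [show R * K_S * R = R * (K_S * R) from by rw [mul_assoc], Matrix.transpose_mul, Matrix.transpose_mul,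
      hRsymm, hKskew]
    noncomm_ring
  refine ⟨ha, ?_, ?_⟩
  -- part (b)
  · have hKSA : R * K_S * R⁻¹ * S * A = R * (K_S * (R * A * R⁻¹)) * R := by
      rw [hKS]
      calc R * K_S * R * A = R * K_S * (R * A * (R⁻¹ * R)) := by rw [hRiR]; noncomm_ring
        _ = R * (K_S * (R * A * R⁻¹)) * R := by noncomm_ring
    have hSB' : S * B = R * (R * B * R⁻¹) * R := by
      rw [← hRR]
      calc R * R * B = R * (R * B * (R⁻¹ * R)) := by rw [hRiR]; noncomm_ring
        _ = R * (R * B * R⁻¹) * R := by noncomm_ring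
    have hsym : ∀ M : Matrix (Fin n) (Fin n) ℝ, symPart (R * M * R) = R * symPart M * R := by
      intro M
      simp only [symPart, Matrix.transpose_mul, hRsymm]
      rw [Matrix.mul_smul, Matrix.smul_mul]
      congr 1
      noncomm_ring
    rw [hKSA, hSB', hsym]
    noncomm_ring
  · have hb : symPart (R * K_S * R⁻¹ * S * A) + S * B =
        R * (symPart (K_S * (R * A * R⁻¹)) + R * B * R⁻¹) * R := by
      have hKSA : R * K_S * R⁻¹ * S * A = R * (K_S * (R * A * R⁻¹)) * R := by
        rw [hKS]
        calc R * K_S * R * A = R * K_S * (R * A * (R⁻¹ * R)) := by rw [hRiR]; noncomm_ring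
          _ = R * (K_S * (R * A * R⁻¹)) * R := by noncomm_ring
      have hSB' : S * B = R * (R * B * R⁻¹) * R := by
        rw [← hRR]
        calc R * R * B = R * (R * B * (R⁻¹ * R)) := by rw [hRiR]; noncomm_ring
          _ = R * (R * B * R⁻¹) * R := by noncomm_ring
      have hsym : symPart (R * (K_S * (R * A * R⁻¹)) * R)
          = R * symPart (K_S * (R * A * R⁻¹)) * R := by
        simp only [symPart, Matrix.transpose_mul, hRsymm]
        rw [Matrix.mul_smul, Matrix.smul_mul]
        congr 1
        noncomm_ring
      rw [hKSA, hSB', hsym]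
      noncomm_ring
    rw [hb]
    set M := symPart (K_S * (R * A * R⁻¹)) + R * B * R⁻¹ with hM
    have hθ1 : (θ • (1 : Matrix (Fin n) (Fin n) ℝ)).PosDef := by
      have : θ • (1 : Matrix (Fin n) (Fin n) ℝ) = Matrix.diagonal (fun _ => θ) := by
        rw [Matrix.smul_one_eq_diagonal]
      rw [this]
      exact Matrix.posDef_diagonal_iff.mpr fun _ => hθ
    have hMpd : M.PosDef := by
      have := Matrix.PosDef.posSemidef_add hpos hθ1
      simpa using this
    have hRherm : Rᴴ = R := hRpsd.isHermitian
    have hinj : Function.Injective (R.mulVec) :=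
      Matrix.mulVec_injective_iff_isUnit.mpr ((Matrix.isUnit_iff_isUnit_det R).mpr hRunit)
    have hrw : R * M * R = Rᴴ * M * R := by rw [hRherm]
    rw [hrw]
    exact hMpd.conjTranspose_mul_mul_same hinj
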